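/- arXiv:1405.7063 — 2 statements merged into one kernel-verified Lean document; each statement's English description precedes it below -/
import Mathlib

section
/- Let H be a Hilbert space, let F₁, …, F_N be continuous linear functionals on H and let f ∈ H. Suppose s ∈ H satisfies F_ν(s) = F_ν(f) for all ν = 1, …, N and ‖s‖ ≤ ‖h‖ for every h ∈ H with F_ν(h) = F_ν(f) for all ν (i.e. s is the minimal-norm interpolant). Let K ≥ ‖s‖ and let Q = { h ∈ H : F_ν(h) = F_ν(f) for all ν, and ‖h‖ ≤ K }. Then for every h ∈ Q one has 2s − h ∈ Q, and consequently ‖s − h‖ ≤ (1/2)·diam Q, where diam Q = sup{‖h₁ − h₂‖ : h₁, h₂ ∈ Q}. -/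
/-- The minimal-norm interpolant s is the symmetry center of the convex bounded set Q
of all interpolants of norm at most K: for every h ∈ Q one has 2s − h ∈ Q and hence
‖s − h‖ ≤ (1/2)·diam Q. -/
theorem spline_symmetry_center
    {𝕜 : Type*} [RCLike 𝕜] {H : Type*} [NormedAddCommGroup H]
    [InnerProductSpace 𝕜 H] [CompleteSpace H]
    (N : ℕ) (F : Fin N → (H →L[𝕜] 𝕜)) (f s : H)
    (hs_interp : ∀ ν, F ν s = F ν f)
    (hs_min : ∀ h : H, (∀ ν, F ν h = F ν f) → ‖s‖ ≤ ‖h‖)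
    (K : ℝ) (hK : ‖s‖ ≤ K) :
    ∀ h : H, (∀ ν, F ν h = F ν f) → ‖h‖ ≤ K →
      (∀ ν, F ν ((2 : 𝕜) • s - h) = F ν f) ∧ ‖(2 : 𝕜) • s - h‖ ≤ K ∧
      ‖s - h‖ ≤ (1 / 2) *
        Metric.diam {h' : H | (∀ ν, F ν h' = F ν f) ∧ ‖h'‖ ≤ K} := by
  intro h hinterp hnorm
  set v : H := s - h with hv
  have hv0 : ∀ ν, F ν v = 0 := by
    intro ν
    simp [hv, map_sub, hs_interp ν, hinterp ν]
  -- orthogonality: re ⟪s, v⟫ = 0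
  have hkey : ∀ t : ℝ, 0 ≤ 2 * t * RCLike.re (@inner 𝕜 H _ s v) + t ^ 2 * ‖v‖ ^ 2 := by
    intro t
    have hint : ∀ ν, F ν (s + (t : 𝕜) • v) = F ν f := by
      intro ν
      simp [map_add, map_smul, hv0 ν, hs_interp ν]
    have hle : ‖s‖ ≤ ‖s + (t : 𝕜) • v‖ := hs_min _ hint
    have hsq : ‖s‖ ^ 2 ≤ ‖s + (t : 𝕜) • v‖ ^ 2 := by
      exact pow_le_pow_left₀ (norm_nonneg _) hle 2
    have hexp : ‖s + (t : 𝕜) • v‖ ^ 2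
        = ‖s‖ ^ 2 + 2 * (t * RCLike.re (@inner 𝕜 H _ s v)) + t ^ 2 * ‖v‖ ^ 2 := by
      rw [@norm_add_sq 𝕜]
      have h1 : RCLike.re (@inner 𝕜 H _ s ((t : 𝕜) • v))
          = t * RCLike.re (@inner 𝕜 H _ s v) := by
        rw [inner_smul_right]
        exact RCLike.re_ofReal_mul t _
      have h2 : ‖(t : 𝕜) • v‖ ^ 2 = t ^ 2 * ‖v‖ ^ 2 := by
        rw [norm_smul, RCLike.norm_ofReal, mul_pow, sq_abs]
      rw [h1, h2]
    nlinarith [hsq, hexp]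
  have hre : RCLike.re (@inner 𝕜 H _ s v) = 0 := by
    by_contra hne
    set r := RCLike.re (@inner 𝕜 H _ s v) with hr
    set c : ℝ := ‖v‖ ^ 2 + 1 with hc
    have hcpos : 0 < c := by positivity
    have hth := hkey (-r / c)
    have hr2 : 0 < r ^ 2 := by positivity
    have h' : 0 ≤ (2 * (-r / c) * r + (-r / c) ^ 2 * (c - 1)) * c ^ 2 := by
      have hvv : ‖v‖ ^ 2 = c - 1 := by rw [hc]; ring
      rw [hvv] at hth
      exact mul_nonneg (by linarith [hth]) (sq_nonneg c)
    have he : (2 * (-r / c) * r + (-r / c) ^ 2 * (c - 1)) * c ^ 2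
        = -(r ^ 2) * (c + 1) := by
      field_simp
      ring
    rw [he] at h'
    nlinarith
  -- norm equality: ‖s + v‖ = ‖s - v‖ = ‖h‖
  have hnormeq : ‖(2 : 𝕜) • s - h‖ = ‖h‖ := by
    have e1 : (2 : 𝕜) • s - h = s + v := by
      rw [hv]; have : ((2:𝕜) • s) = s + s := by
        rw [two_smul]
      rw [this]; abel
    have e2 : h = s - v := by rw [hv]; abel
    have q1 : ‖s + v‖ ^ 2 = ‖s‖ ^ 2 + ‖v‖ ^ 2 := by
      rw [@norm_add_sq 𝕜, hre]; ring
    have q2 : ‖s - v‖ ^ 2 = ‖s‖ ^ 2 + ‖v‖ ^ 2 := by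
      rw [@norm_sub_sq 𝕜, hre]; ring
    have : ‖s + v‖ ^ 2 = ‖s - v‖ ^ 2 := by rw [q1, q2]
    have heq := (sq_eq_sq₀ (norm_nonneg _) (norm_nonneg _)).mp this
    rw [e1]; conv_rhs => rw [e2, ← heq]
  have hmem2 : (∀ ν, F ν ((2 : 𝕜) • s - h) = F ν f) := by
    intro ν
    have : (2 : 𝕜) • s - h = s + v := by
      rw [hv, two_smul]; abel
    rw [this, map_add, hv0 ν, add_zero, hs_interp ν]
  refine ⟨hmem2, hnormeq ▸ hnorm, ?_⟩
  -- diameter bound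
  set Q := {h' : H | (∀ ν, F ν h' = F ν f) ∧ ‖h'‖ ≤ K} with hQ
  have hbdd : Bornology.IsBounded Q := by
    apply Bornology.IsBounded.subset (Metric.isBounded_closedBall (x := (0 : H)) (r := K))
    intro x hx
    simpa [Metric.mem_closedBall, dist_zero_right] using hx.2
  have hm1 : ((2 : 𝕜) • s - h) ∈ Q := ⟨hmem2, hnormeq ▸ hnorm⟩
  have hm2 : h ∈ Q := ⟨hinterp, hnorm⟩
  have hdist : dist ((2 : 𝕜) • s - h) h ≤ Metric.diam Q :=
    Metric.dist_le_diam_of_mem hbdd hm1 hm2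
  have : (2 : 𝕜) • s - h - h = (2 : 𝕜) • (s - h) := by
    rw [two_smul, two_smul]; abel
  rw [dist_eq_norm, this, norm_smul] at hdist
  have h2 : ‖(2 : 𝕜)‖ = 2 := by simp
  rw [h2] at hdist
  linarith
end

section
/- Let w : ℕ → ℝ satisfy w_j ≥ 1 for all j, and let H be the Hilbert space of sequences c : ℕ → ℂ with Σ_j w_j |c_j|² < ∞, with inner product ⟨c, d⟩_w = Σ_j w_j c_j \overline{d_j}. For ν = 1, …, N let a_ν : ℕ → ℂ satisfy Σ_j w_j^{-1} |a_ν(j)|² < ∞, and define the continuous linear functional F_ν(c) = Σ_j c_j \overline{a_ν(j)} on H (the series converges absolutely by Cauchy–Schwarz). Let v ∈ ℂ^N, set β_{μν} = Σ_j w_j^{-1} a_ν(j) \overline{a_μ(j)}, and suppose α ∈ ℂ^N solves Σ_{ν=1}^N β_{μν} α_ν = v_μ for μ = 1, …, N. Define s by s_j = w_j^{-1} Σ_{ν=1}^N α_ν a_ν(j). Then s ∈ H, F_μ(s) = v_μ for all μ, and s is the unique minimizer of Σ_j w_j |c_j|² among all c ∈ H with F_ν(c) = v_ν for all ν. -/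
open Complex

private lemma vss_prod_bound (W X Y : ℝ) (hW : 0 < W) (hX : 0 ≤ X) (hY : 0 ≤ Y) :
    X * Y ≤ W * X ^ 2 + W⁻¹ * Y ^ 2 := by
  have hWi : (0:ℝ) ≤ W⁻¹ := le_of_lt (inv_pos.2 hW)
  rcases le_total Y (W * X) with h | h
  · have h1 : X * Y ≤ X * (W * X) := mul_le_mul_of_nonneg_left h hX
    nlinarith [mul_nonneg hWi (sq_nonneg Y)]
  · have hX' : X ≤ W⁻¹ * Y := by
      have := mul_le_mul_of_nonneg_left h hWi
      rwa [← mul_assoc, inv_mul_cancel₀ (ne_of_gt hW), one_mul] at this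
    have h1 : X * Y ≤ (W⁻¹ * Y) * Y := mul_le_mul_of_nonneg_right hX' hY
    nlinarith [mul_nonneg (le_of_lt hW) (sq_nonneg X)]

private lemma vss_sumA (w : ℕ → ℝ) (hw0 : ∀ j, 0 < w j) (c b : ℕ → ℂ)
    (hc : Summable fun j => w j * ‖c j‖ ^ 2)
    (hb : Summable fun j => (w j)⁻¹ * ‖b j‖ ^ 2) :
    Summable fun j => c j * (starRingEnd ℂ) (b j) := by
  apply Summable.of_norm
  apply Summable.of_nonneg_of_le (fun j => norm_nonneg _) _ (hc.add hb)
  intro j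
  rw [norm_mul, RCLike.norm_conj]
  exact vss_prod_bound (w j) _ _ (hw0 j) (norm_nonneg _) (norm_nonneg _)

private lemma vss_sumB (w : ℕ → ℝ) (hw0 : ∀ j, 0 < w j) (x y : ℕ → ℂ)
    (hx : Summable fun j => (w j)⁻¹ * ‖x j‖ ^ 2)
    (hy : Summable fun j => (w j)⁻¹ * ‖y j‖ ^ 2) :
    Summable fun j => ((w j : ℂ))⁻¹ * (x j * (starRingEnd ℂ) (y j)) := by
  apply Summable.of_norm
  apply Summable.of_nonneg_of_le (fun j => norm_nonneg _) _ (hx.add hy)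
  intro j
  have hWi : (0:ℝ) ≤ (w j)⁻¹ := le_of_lt (inv_pos.2 (hw0 j))
  rw [norm_mul, norm_mul, RCLike.norm_conj, norm_inv, Complex.norm_real,
    Real.norm_eq_abs, abs_of_pos (hw0 j)]
  have h2 : ‖x j‖ * ‖y j‖ ≤ ‖x j‖ ^ 2 + ‖y j‖ ^ 2 := by
    nlinarith [sq_nonneg (‖x j‖ - ‖y j‖), mul_nonneg (norm_nonneg (x j)) (norm_nonneg (y j))]
  calc (w j)⁻¹ * (‖x j‖ * ‖y j‖) ≤ (w j)⁻¹ * (‖x j‖ ^ 2 + ‖y j‖ ^ 2) :=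
        mul_le_mul_of_nonneg_left h2 hWi
    _ = (w j)⁻¹ * ‖x j‖ ^ 2 + (w j)⁻¹ * ‖y j‖ ^ 2 := by ring

/-- Sequence-space form of the main theorem on generalized variational splines:
in the weighted ℓ²-space with weights w_j ≥ 1, the sequence
s_j = w_j^{-1} Σ_ν α_ν a_ν(j), where α solves the linear system with Gram matrix
β_{μν} = Σ_j w_j^{-1} a_ν(j) conj(a_μ(j)), belongs to the space, satisfies the
interpolation constraints F_μ(s) = v_μ, and is the unique minimizer of the weighted
norm among all interpolants. -/
theorem variational_spline_sequence_space
    (w : ℕ → ℝ) (hw : ∀ j, 1 ≤ w j)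
    (N : ℕ) (a : Fin N → ℕ → ℂ)
    (ha : ∀ ν, Summable fun j => (w j)⁻¹ * ‖a ν j‖ ^ 2)
    (v : Fin N → ℂ) (α : Fin N → ℂ)
    (hα : ∀ μ : Fin N,
      ∑ ν : Fin N, (∑' j : ℕ, ((w j : ℂ)⁻¹ * (a ν j * (starRingEnd ℂ) (a μ j)))) * α ν
        = v μ)
    (s : ℕ → ℂ) (hs : ∀ j, s j = (w j : ℂ)⁻¹ * ∑ ν : Fin N, α ν * a ν j) :
    (Summable fun j => w j * ‖s j‖ ^ 2) ∧
    (∀ μ : Fin N, ∑' j : ℕ, s j * (starRingEnd ℂ) (a μ j) = v μ) ∧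
    (∀ c : ℕ → ℂ, (Summable fun j => w j * ‖c j‖ ^ 2) →
      (∀ ν : Fin N, ∑' j : ℕ, c j * (starRingEnd ℂ) (a ν j) = v ν) →
      (∑' j : ℕ, w j * ‖s j‖ ^ 2 ≤ ∑' j : ℕ, w j * ‖c j‖ ^ 2) ∧
      ((∑' j : ℕ, w j * ‖c j‖ ^ 2) = (∑' j : ℕ, w j * ‖s j‖ ^ 2) → c = s)) := by
  have hw0 : ∀ j, 0 < w j := fun j => lt_of_lt_of_le one_pos (hw j)
  have hwne : ∀ j, ((w j : ℝ) : ℂ) ≠ 0 := fun j => by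
    exact_mod_cast Complex.ofReal_ne_zero.2 (hw0 j).ne'
  -- pointwise formula for the weighted norm of s
  have hsnorm : ∀ j, w j * ‖s j‖ ^ 2 = (w j)⁻¹ * ‖∑ ν : Fin N, α ν * a ν j‖ ^ 2 := by
    intro j
    rw [hs j, norm_mul, norm_inv, Complex.norm_real, Real.norm_eq_abs,
      abs_of_pos (hw0 j), mul_pow]
    field_simp [(hw0 j).ne']
  -- s has finite weighted norm
  have hS : Summable fun j => w j * ‖s j‖ ^ 2 := by
    simp only [hsnorm]
    refine Summable.of_nonneg_of_le
      (fun j => mul_nonneg (le_of_lt (inv_pos.2 (hw0 j))) (sq_nonneg _)) (fun j => ?_)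
      (summable_sum (s := (Finset.univ : Finset (Fin N))) fun ν _ => ((ha ν).mul_left ((N : ℝ) * ‖α ν‖ ^ 2)))
    have hWi : (0:ℝ) ≤ (w j)⁻¹ := le_of_lt (inv_pos.2 (hw0 j))
    have h1 : ‖∑ ν : Fin N, α ν * a ν j‖ ≤ ∑ ν : Fin N, ‖α ν * a ν j‖ :=
      norm_sum_le _ _
    have h2 : (∑ ν : Fin N, ‖α ν * a ν j‖) ^ 2
        ≤ (N : ℝ) * ∑ ν : Fin N, ‖α ν * a ν j‖ ^ 2 := by
      simpa using
        sq_sum_le_card_mul_sum_sq (s := (Finset.univ : Finset (Fin N)))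
          (f := fun ν => ‖α ν * a ν j‖)
    have h3 : ‖∑ ν : Fin N, α ν * a ν j‖ ^ 2
        ≤ (N : ℝ) * ∑ ν : Fin N, ‖α ν * a ν j‖ ^ 2 :=
      le_trans (pow_le_pow_left₀ (norm_nonneg _) h1 2) h2
    calc (w j)⁻¹ * ‖∑ ν : Fin N, α ν * a ν j‖ ^ 2
        ≤ (w j)⁻¹ * ((N : ℝ) * ∑ ν : Fin N, ‖α ν * a ν j‖ ^ 2) :=
          mul_le_mul_of_nonneg_left h3 hWi
      _ = ∑ ν : Fin N, (N : ℝ) * ‖α ν‖ ^ 2 * ((w j)⁻¹ * ‖a ν j‖ ^ 2) := by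
          rw [Finset.mul_sum, Finset.mul_sum]
          exact Finset.sum_congr rfl fun ν _ => by rw [norm_mul, mul_pow]; ring
  -- the Gram-matrix entries are given by convergent series
  have hbase : ∀ ν μ : Fin N,
      Summable fun j => ((w j : ℂ))⁻¹ * (a ν j * (starRingEnd ℂ) (a μ j)) :=
    fun ν μ => vss_sumB w hw0 (a ν) (a μ) (ha ν) (ha μ)
  -- s satisfies the interpolation constraints
  have part2 : ∀ μ : Fin N, ∑' j : ℕ, s j * (starRingEnd ℂ) (a μ j) = v μ := by
    intro μ
    have hpt : ∀ j, s j * (starRingEnd ℂ) (a μ j)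
        = ∑ ν : Fin N, α ν * (((w j : ℂ))⁻¹ * (a ν j * (starRingEnd ℂ) (a μ j))) := by
      intro j
      rw [hs j, Finset.mul_sum, Finset.sum_mul]
      exact Finset.sum_congr rfl fun ν _ => by ring
    rw [tsum_congr hpt, Summable.tsum_finsetSum (fun ν _ => ((hbase ν μ).mul_left (α ν))), ← hα μ]
    exact Finset.sum_congr rfl fun ν _ => by
      rw [(hbase ν μ).tsum_mul_left (α ν)]; ring
  refine ⟨hS, part2, ?_⟩
  intro c hc hcv
  set d : ℕ → ℂ := fun j => c j - s j with hd
  have hd2 : Summable fun j => w j * ‖d j‖ ^ 2 := by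
    refine Summable.of_nonneg_of_le
      (fun j => mul_nonneg (hw0 j).le (sq_nonneg _)) (fun j => ?_)
      ((hc.mul_left 2).add (hS.mul_left 2))
    have h1 : ‖d j‖ ≤ ‖c j‖ + ‖s j‖ := norm_sub_le _ _
    have h4 : ‖d j‖ ^ 2 ≤ (‖c j‖ + ‖s j‖) ^ 2 := pow_le_pow_left₀ (norm_nonneg _) h1 2
    nlinarith [hw0 j, sq_nonneg (‖c j‖ - ‖s j‖),
      mul_le_mul_of_nonneg_left h4 (le_of_lt (hw0 j))]
  have hdsum : ∀ ν, Summable fun j => d j * (starRingEnd ℂ) (a ν j) :=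
    fun ν => vss_sumA w hw0 d (a ν) hd2 (ha ν)
  have hcsum : ∀ ν, Summable fun j => c j * (starRingEnd ℂ) (a ν j) :=
    fun ν => vss_sumA w hw0 c (a ν) hc (ha ν)
  have hssum : ∀ ν, Summable fun j => s j * (starRingEnd ℂ) (a ν j) :=
    fun ν => vss_sumA w hw0 s (a ν) hS (ha ν)
  have hdF : ∀ ν : Fin N, ∑' j : ℕ, d j * (starRingEnd ℂ) (a ν j) = 0 := by
    intro ν
    have hpt : (fun j => d j * (starRingEnd ℂ) (a ν j))
        = fun j => c j * (starRingEnd ℂ) (a ν j) - s j * (starRingEnd ℂ) (a ν j) := by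
      funext j; simp only [hd]; ring
    rw [hpt, Summable.tsum_sub (hcsum ν) (hssum ν), hcv ν, part2 ν, sub_self]
  -- the cross term
  have hptc : ∀ j, (w j : ℂ) * (d j * (starRingEnd ℂ) (s j))
      = ∑ ν : Fin N, (starRingEnd ℂ) (α ν) * (d j * (starRingEnd ℂ) (a ν j)) := by
    intro j
    have h1 : ((w j : ℝ) : ℂ) * ((w j : ℝ) : ℂ)⁻¹ = 1 := mul_inv_cancel₀ (hwne j)
    rw [hs j, map_mul, map_inv₀, Complex.conj_ofReal, map_sum, Finset.mul_sum,
      Finset.mul_sum, Finset.mul_sum]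
    refine Finset.sum_congr rfl fun ν _ => ?_
    rw [map_mul]
    linear_combination (d j * (starRingEnd ℂ) (α ν) * (starRingEnd ℂ) (a ν j)) * h1
  have hcross : Summable fun j => (w j : ℂ) * (d j * (starRingEnd ℂ) (s j)) := by
    rw [show (fun j => (w j : ℂ) * (d j * (starRingEnd ℂ) (s j)))
        = fun j => ∑ ν : Fin N, (starRingEnd ℂ) (α ν) * (d j * (starRingEnd ℂ) (a ν j))
      from funext hptc]
    exact summable_sum (s := (Finset.univ : Finset (Fin N))) fun ν _ => (hdsum ν).mul_left _
  have hcross0 : ∑' j : ℕ, (w j : ℂ) * (d j * (starRingEnd ℂ) (s j)) = 0 := by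
    rw [tsum_congr hptc, Summable.tsum_finsetSum (fun ν _ => (hdsum ν).mul_left _)]
    refine Finset.sum_eq_zero fun ν _ => ?_
    rw [(hdsum ν).tsum_mul_left, hdF ν, mul_zero]
  -- energy identity
  have hn : ∀ z : ℂ, ‖z‖ ^ 2 = Complex.normSq z := fun z => by
    rw [Complex.sq_norm]
  have hEpt : ∀ j, w j * ‖c j‖ ^ 2
      = (w j * ‖s j‖ ^ 2 + w j * ‖d j‖ ^ 2)
        + 2 * ((w j : ℂ) * (d j * (starRingEnd ℂ) (s j))).re := by
    intro j
    have hc' : c j = s j + d j := by simp [hd]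
    have h2 : ((w j : ℂ) * (d j * (starRingEnd ℂ) (s j))).re
        = w j * (s j * (starRingEnd ℂ) (d j)).re := by
      rw [Complex.re_ofReal_mul]
      congr 1
      have h3 : s j * (starRingEnd ℂ) (d j)
          = (starRingEnd ℂ) (d j * (starRingEnd ℂ) (s j)) := by
        rw [map_mul, Complex.conj_conj]; ring
      rw [h3, Complex.conj_re]
    rw [hc', hn, hn, hn, Complex.normSq_add, h2]
    ring
  have hre : Summable fun j => ((w j : ℂ) * (d j * (starRingEnd ℂ) (s j))).re := by
    simpa using Complex.reCLM.summable hcross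
  have key : ∑' j : ℕ, w j * ‖c j‖ ^ 2
      = (∑' j : ℕ, w j * ‖s j‖ ^ 2) + ∑' j : ℕ, w j * ‖d j‖ ^ 2 := by
    rw [tsum_congr hEpt, Summable.tsum_add (hS.add hd2) (hre.mul_left 2),
      Summable.tsum_add hS hd2, (hre).tsum_mul_left 2, ← Complex.re_tsum hcross, hcross0]
    simp
  constructor
  · have hnn : 0 ≤ ∑' j : ℕ, w j * ‖d j‖ ^ 2 := tsum_nonneg fun j => mul_nonneg (hw0 j).le (sq_nonneg _)
    linarith [key]
  · intro heq
    have hzero : ∑' j : ℕ, w j * ‖d j‖ ^ 2 = 0 := by linarith [key]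
    funext j
    have h1 : w j * ‖d j‖ ^ 2 ≤ 0 :=
      hzero ▸ Summable.le_tsum hd2 j (fun i _ => mul_nonneg (hw0 i).le (sq_nonneg _))
    have h2 : 0 ≤ w j * ‖d j‖ ^ 2 := mul_nonneg (hw0 j).le (sq_nonneg _)
    have h3 : w j * ‖d j‖ ^ 2 = 0 := le_antisymm h1 h2
    have h4 : ‖d j‖ ^ 2 = 0 := by
      rcases mul_eq_zero.1 h3 with h | h
      · exact absurd h (hw0 j).ne'
      · exact h
    have h5 : d j = 0 := by
      rwa [pow_eq_zero_iff (two_ne_zero), norm_eq_zero] at h4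
    exact sub_eq_zero.1 h5
end
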